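/- Suppose H_1, ..., H_r are k-cyclic graphs on n−p vertices that are the unique maximizers (all attaining the common maximum value) of M_1 among k-cyclic graphs on n−p vertices. If G is a p-quasi k-cyclic graph on n vertices that is not isomorphic to any H_i + K_p, then M_1(G) < M_1(H_1 + K_p). -/

import Mathlib

open scoped Classical
noncomputable def M1 {V : Type*} [Fintype V] (G : SimpleGraph V) : ℕ :=
  ∑ v, G.degree v ^ 2
noncomputable def M2 {V : Type*} [Fintype V] (G : SimpleGraph V) : ℕ :=
  ∑ e ∈ G.edgeFinset,
    Sym2.lift ⟨fun u v => G.degree u * G.degree v, fun _ _ => Nat.mul_comm _ _⟩ e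
noncomputable def numEdges {V : Type*} [Fintype V] (G : SimpleGraph V) : ℕ :=
  G.edgeFinset.card
def IsKCyclic {V : Type*} [Fintype V] (k : ℕ) (G : SimpleGraph V) : Prop :=
  G.Connected ∧ G.edgeFinset.card + 1 = Fintype.card V + k
def starGraph (n : ℕ) : SimpleGraph (Fin n) :=
  { Adj := fun u v => u ≠ v ∧ (u.val = 0 ∨ v.val = 0)
    symm := by constructor; intro u v h; exact ⟨h.1.symm, h.2.symm⟩
    loopless := by constructor; intro u h; exact h.1 rfl }
def joinG {α β : Type*} (G : SimpleGraph α) (H : SimpleGraph β) : SimpleGraph (α ⊕ β) :=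
  { Adj := fun u v =>
      match u, v with
      | Sum.inl a, Sum.inl b => G.Adj a b
      | Sum.inr a, Sum.inr b => H.Adj a b
      | Sum.inl _, Sum.inr _ => True
      | Sum.inr _, Sum.inl _ => True
    symm := by
      constructor
      intro u v h
      cases u <;> cases v <;> simp_all [SimpleGraph.adj_comm]
    loopless := by
      constructor
      intro u h
      cases u <;> simp_all }
noncomputable def deleteS {V : Type*} [Fintype V] (G : SimpleGraph V) (S : Finset V) :
    SimpleGraph ↥((↑S : Set V)ᶜ) :=
  G.induce ((↑S : Set V)ᶜ)
def QuasiKCyclic {V : Type*} [Fintype V] (k p : ℕ) (G : SimpleGraph V) : Prop :=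
  G.Connected ∧
  (∃ S : Finset V, S.card = p ∧ IsKCyclic k (deleteS G S)) ∧
  ∀ S' : Finset V, IsKCyclic k (deleteS G S') → p ≤ S'.card
def Un3 (n : ℕ) : SimpleGraph (Fin n) :=
  { Adj := fun u v => u ≠ v ∧ (u.val = 0 ∨ v.val = 0 ∨ (u.val ≤ 2 ∧ v.val ≤ 2))
    symm := by constructor; intro u v h; tauto
    loopless := by constructor; intro u h; exact h.1 rfl }
def Bn33 (n : ℕ) : SimpleGraph (Fin n) :=
  { Adj := fun u v => u ≠ v ∧ (u.val = 0 ∨ v.val = 0 ∨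
      (1 ≤ u.val ∧ u.val ≤ 2 ∧ 1 ≤ v.val ∧ v.val ≤ 2) ∨
      (3 ≤ u.val ∧ u.val ≤ 4 ∧ 3 ≤ v.val ∧ v.val ≤ 4))
    symm := by constructor; intro u v h; tauto
    loopless := by constructor; intro u h; exact h.1 rfl }

/- ## Auxiliary lemmas -/

section AuxIso
variable {V W : Type*} [Fintype V] [Fintype W]

lemma degree_iso' {G : SimpleGraph V} {G' : SimpleGraph W} (f : G ≃g G') (v : V) :
    G'.degree (f v) = G.degree v := by
  rw [← SimpleGraph.card_neighborSet_eq_degree, ← SimpleGraph.card_neighborSet_eq_degree]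
  exact (Fintype.card_congr (f.mapNeighborSet v)).symm

lemma M1_iso' {G : SimpleGraph V} {G' : SimpleGraph W} (f : G ≃g G') : M1 G = M1 G' := by
  unfold M1
  rw [← Equiv.sum_comp f.toEquiv (fun w => G'.degree w ^ 2)]
  exact Finset.sum_congr rfl fun v _ => by
    rw [show f.toEquiv v = f v from rfl, degree_iso' f v]

lemma card_edge_iso' {G : SimpleGraph V} {G' : SimpleGraph W} (f : G ≃g G') :
    G.edgeFinset.card = G'.edgeFinset.card := by
  rw [SimpleGraph.edgeFinset_card, SimpleGraph.edgeFinset_card]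
  exact Fintype.card_congr f.mapEdgeSet

lemma card_edgeFinset_eq_natCard' {G : SimpleGraph V} [Fintype G.edgeSet] :
    G.edgeFinset.card = Nat.card G.edgeSet := by
  rw [SimpleGraph.edgeFinset_card, Nat.card_eq_fintype_card]

lemma isKCyclic_irrel'' {V : Type*} {i1 i2 : Fintype V} {k : ℕ} {G : SimpleGraph V}
    (h : @IsKCyclic V i1 k G) : @IsKCyclic V i2 k G :=
  (Subsingleton.elim i1 i2) ▸ h

lemma isKCyclic_iso' {k : ℕ} {G : SimpleGraph V} {G' : SimpleGraph W} (f : G ≃g G')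
    (h : IsKCyclic k G) : IsKCyclic k G' := by
  refine ⟨f.connected_iff.mp h.1, ?_⟩
  rw [← card_edge_iso' f, ← f.card_eq]
  exact h.2

lemma M1_mono' {G G' : SimpleGraph V} (hle : G ≤ G') : M1 G ≤ M1 G' := by
  refine Finset.sum_le_sum fun v _ => Nat.pow_le_pow_left ?_ 2
  apply Finset.card_le_card
  intro u hu
  rw [SimpleGraph.mem_neighborFinset] at hu ⊢
  exact hle hu

lemma M1_lt_of_lt' {G G' : SimpleGraph V} (hle : G ≤ G') (hne : G ≠ G') : M1 G < M1 G' := by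
  obtain ⟨u, v, hadj, hnadj⟩ : ∃ u v, G'.Adj u v ∧ ¬ G.Adj u v := by
    by_contra h
    push_neg at h
    exact hne (le_antisymm hle fun a b hab => h a b hab)
  have hstrict : G.degree u < G'.degree u := by
    apply Finset.card_lt_card
    constructor
    · intro x hx; rw [SimpleGraph.mem_neighborFinset] at hx ⊢; exact hle hx
    · intro hsub
      have := hsub (by rw [SimpleGraph.mem_neighborFinset]; exact hadj)
      rw [SimpleGraph.mem_neighborFinset] at this
      exact hnadj this
  refine Finset.sum_lt_sum (fun i _ => Nat.pow_le_pow_left ?_ 2)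
    ⟨u, Finset.mem_univ u, Nat.pow_lt_pow_left hstrict (by norm_num)⟩
  apply Finset.card_le_card
  intro x hx
  rw [SimpleGraph.mem_neighborFinset] at hx ⊢
  exact hle hx

end AuxIso

lemma degree_eq_sum' {V : Type*} [Fintype V] (G : SimpleGraph V) (v : V) :
    G.degree v = ∑ u, if G.Adj v u then 1 else 0 := by
  rw [SimpleGraph.degree, SimpleGraph.neighborFinset_eq_filter, Finset.card_filter]

@[simp] lemma joinG_adj_inl_inl' {α β : Type*} (G : SimpleGraph α) (H : SimpleGraph β) (a b : α) :
    (joinG G H).Adj (Sum.inl a) (Sum.inl b) ↔ G.Adj a b := Iff.rfl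
@[simp] lemma joinG_adj_inr_inr' {α β : Type*} (G : SimpleGraph α) (H : SimpleGraph β) (a b : β) :
    (joinG G H).Adj (Sum.inr a) (Sum.inr b) ↔ H.Adj a b := Iff.rfl
@[simp] lemma joinG_adj_inl_inr' {α β : Type*} (G : SimpleGraph α) (H : SimpleGraph β) (a : α) (b : β) :
    (joinG G H).Adj (Sum.inl a) (Sum.inr b) := trivial
@[simp] lemma joinG_adj_inr_inl' {α β : Type*} (G : SimpleGraph α) (H : SimpleGraph β) (a : β) (b : α) :
    (joinG G H).Adj (Sum.inr a) (Sum.inl b) := trivial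

lemma degree_joinG_inl' {α β : Type*} [Fintype α] [Fintype β]
    (G : SimpleGraph α) (H : SimpleGraph β) (a : α) :
    (joinG G H).degree (Sum.inl a) = G.degree a + Fintype.card β := by
  rw [degree_eq_sum', Fintype.sum_sum_type]
  simp [degree_eq_sum', joinG]
  exact (Finset.card_filter _ _).symm

lemma degree_joinG_inr' {α β : Type*} [Fintype α] [Fintype β]
    (G : SimpleGraph α) (H : SimpleGraph β) (b : β) :
    (joinG G H).degree (Sum.inr b) = H.degree b + Fintype.card α := by
  rw [degree_eq_sum', Fintype.sum_sum_type]
  simp [degree_eq_sum', joinG, add_comm]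
  exact (Finset.card_filter _ _).symm

lemma M1_joinG_eq' (m q : ℕ) (Hm : SimpleGraph (Fin m)) :
    M1 (joinG Hm (SimpleGraph.completeGraph (Fin q))) =
      M1 Hm + 2 * q * (∑ a, Hm.degree a) + m * q ^ 2
        + (∑ b : Fin q, ((SimpleGraph.completeGraph (Fin q)).degree b + m) ^ 2) := by
  unfold M1
  rw [Fintype.sum_sum_type]
  have h1 : ∀ a : Fin m, (joinG Hm (SimpleGraph.completeGraph (Fin q))).degree (Sum.inl a) ^ 2
      = Hm.degree a ^ 2 + 2 * q * Hm.degree a + q ^ 2 := by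
    intro a; rw [degree_joinG_inl']; simp; ring
  have h2 : ∀ b : Fin q, (joinG Hm (SimpleGraph.completeGraph (Fin q))).degree (Sum.inr b) ^ 2
      = ((SimpleGraph.completeGraph (Fin q)).degree b + m) ^ 2 := by
    intro b; rw [degree_joinG_inr']; simp only [Fintype.card_fin]
    convert rfl
  simp_rw [h1, h2]
  rw [Finset.sum_add_distrib, Finset.sum_add_distrib, ← Finset.mul_sum, Finset.sum_const,
    Finset.card_univ]
  simp [Fintype.card_fin, smul_eq_mul, mul_comm]

lemma M1_join_le' (m q : ℕ) (H1 H2 : SimpleGraph (Fin m))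
    (hcard : Nat.card H1.edgeSet = Nat.card H2.edgeSet)
    (hM : M1 H1 ≤ M1 H2) :
    M1 (joinG H1 (SimpleGraph.completeGraph (Fin q))) ≤ M1 (joinG H2 (SimpleGraph.completeGraph (Fin q))) := by
  have hs : (∑ a, H1.degree a) = (∑ a, H2.degree a) := by
    rw [SimpleGraph.sum_degrees_eq_twice_card_edges, SimpleGraph.sum_degrees_eq_twice_card_edges,
      card_edgeFinset_eq_natCard', card_edgeFinset_eq_natCard', hcard]
  have f1 := M1_joinG_eq' m q H1
  have f2 := M1_joinG_eq' m q H2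
  rw [hs] at f1
  omega

lemma M1_join_lt' (m q : ℕ) (H1 H2 : SimpleGraph (Fin m))
    (hcard : Nat.card H1.edgeSet = Nat.card H2.edgeSet)
    (hM : M1 H1 < M1 H2) :
    M1 (joinG H1 (SimpleGraph.completeGraph (Fin q))) < M1 (joinG H2 (SimpleGraph.completeGraph (Fin q))) := by
  have hs : (∑ a, H1.degree a) = (∑ a, H2.degree a) := by
    rw [SimpleGraph.sum_degrees_eq_twice_card_edges, SimpleGraph.sum_degrees_eq_twice_card_edges,
      card_edgeFinset_eq_natCard', card_edgeFinset_eq_natCard', hcard]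
  have f1 := M1_joinG_eq' m q H1
  have f2 := M1_joinG_eq' m q H2
  rw [hs] at f1
  omega

def joinIsoLeft' {α α' β : Type*} {G1 : SimpleGraph α} {G2 : SimpleGraph α'}
    (K : SimpleGraph β) (f : G1 ≃g G2) : joinG G1 K ≃g joinG G2 K where
  toEquiv := Equiv.sumCongr f.toEquiv (Equiv.refl β)
  map_rel_iff' := by
    intro u v
    cases u <;> cases v <;> simp [joinG, f.map_rel_iff]

/-- `G` together with all edges incident to `S` added. -/
def addClique {V : Type*} (G : SimpleGraph V) (S : Finset V) : SimpleGraph V where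
  Adj u v := u ≠ v ∧ (G.Adj u v ∨ u ∈ S ∨ v ∈ S)
  symm := by
    constructor
    intro u v h
    exact ⟨h.1.symm, h.2.elim (fun ha => Or.inl ha.symm)
      (fun h => h.elim (fun h => Or.inr (Or.inr h)) (fun h => Or.inr (Or.inl h)))⟩
  loopless := ⟨fun u h => h.1 rfl⟩

@[simp] lemma addClique_adj {V : Type*} (G : SimpleGraph V) (S : Finset V) (u v : V) :
    (addClique G S).Adj u v ↔ u ≠ v ∧ (G.Adj u v ∨ u ∈ S ∨ v ∈ S) := Iff.rfl

theorem stmt19 {n p k r : ℕ} (hr : 0 < r) (hpn : p ≤ n)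
    (H : Fin r → SimpleGraph (Fin (n - p)))
    (hkcyc : ∀ i, IsKCyclic k (H i))
    (heq : ∀ i j, M1 (H i) = M1 (H j))
    (hmax : ∀ H' : SimpleGraph (Fin (n - p)), IsKCyclic k H' →
      (¬ ∃ i, Nonempty (H' ≃g H i)) → M1 H' < M1 (H ⟨0, hr⟩))
    (G : SimpleGraph (Fin n)) (hG : QuasiKCyclic k p G)
    (hiso : ¬ ∃ i, Nonempty (G ≃g joinG (H i) (SimpleGraph.completeGraph (Fin p)))) :
    M1 G < M1 (joinG (H ⟨0, hr⟩) (SimpleGraph.completeGraph (Fin p))) := by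
  classical
  obtain ⟨hconn, ⟨S, hScard, hSk⟩, hmin⟩ := hG
  have cardS : Fintype.card ((↑S : Set (Fin n)) : Type) = p := by
    rw [← Set.toFinset_card, Finset.toFinset_coe, hScard]
  have cardc : Fintype.card (((↑S : Set (Fin n))ᶜ : Set (Fin n)) : Type) = n - p := by
    rw [Fintype.card_compl_set, ← Set.toFinset_card, Finset.toFinset_coe, Fintype.card_fin,
      hScard]
  set e1 : (((↑S : Set (Fin n))ᶜ : Set (Fin n)) : Type) ≃ Fin (n - p) :=
    Fintype.equivFinOfCardEq cardc with he1
  set e2 : (((↑S : Set (Fin n)) : Set (Fin n)) : Type) ≃ Fin p :=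
    Fintype.equivFinOfCardEq cardS with he2
  set H' : SimpleGraph (Fin (n - p)) :=
    G.comap (fun x => ((e1.symm x : (((↑S : Set (Fin n))ᶜ : Set (Fin n)) : Type)) : Fin n))
    with hH'
  have isoH : deleteS G S ≃g H' :=
    { toEquiv := e1
      map_rel_iff' := by
        intro a b
        simp [hH', deleteS, SimpleGraph.comap] }
  have hKH' : IsKCyclic k H' := isKCyclic_iso' isoH (isKCyclic_irrel'' hSk)
  -- Ghat: G with S turned into a dominating clique
  have hle : G ≤ addClique G S := fun u v h => ⟨h.ne, Or.inl h⟩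
  -- the vertex equivalence
  set ψ : (Fin (n - p) ⊕ Fin p) ≃ Fin n :=
    (Equiv.sumCongr e1.symm e2.symm).trans ((Equiv.sumComm _ _).trans
      (Equiv.sumCompl (fun x => x ∈ (↑S : Set (Fin n))))) with hψ
  have hψl : ∀ a, ψ (Sum.inl a) = ((e1.symm a : _) : Fin n) := fun a => rfl
  have hψr : ∀ b, ψ (Sum.inr b) = ((e2.symm b : _) : Fin n) := fun b => rfl
  have hmeml : ∀ a, ψ (Sum.inl a) ∉ S := fun a hmem => (e1.symm a).2 hmem
  have hmemr : ∀ b, ψ (Sum.inr b) ∈ S := fun b => (e2.symm b).2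
  have iso2 : joinG H' (SimpleGraph.completeGraph (Fin p)) ≃g addClique G S :=
    { toEquiv := ψ
      map_rel_iff' := by
        intro u v
        cases u with
        | inl a =>
          cases v with
          | inl b =>
            simp only [addClique_adj, joinG_adj_inl_inl']
            constructor
            · rintro ⟨hne, h | h | h⟩
              · exact h
              · exact absurd h (hmeml a)
              · exact absurd h (hmeml b)
            · intro h
              exact ⟨fun hc => h.ne (Sum.inl.inj (ψ.injective hc)), Or.inl h⟩
          | inr b =>
            simp only [addClique_adj]
            constructor
            · intro _; exact joinG_adj_inl_inr' _ _ a b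
            · intro _
              refine ⟨?_, Or.inr (Or.inr (hmemr b))⟩
              intro hc
              exact (hmeml a) (hc ▸ hmemr b)
        | inr a =>
          cases v with
          | inl b =>
            simp only [addClique_adj]
            constructor
            · intro _; exact joinG_adj_inr_inl' _ _ a b
            · intro _
              refine ⟨?_, Or.inr (Or.inl (hmemr a))⟩
              intro hc
              exact (hmeml b) (hc.symm ▸ hmemr a)
          | inr b =>
            simp only [addClique_adj, joinG_adj_inr_inr', SimpleGraph.top_adj]
            constructor
            · rintro ⟨hne, _⟩
              intro hab
              exact hne (by rw [hab])
            · intro hab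
              exact ⟨fun hc => hab (by simpa using ψ.injective hc),
                Or.inr (Or.inl (hmemr a))⟩ }
  have isoGhat : addClique G S ≃g joinG H' (SimpleGraph.completeGraph (Fin p)) := iso2.symm
  -- edge counts agree
  have hcard : Nat.card H'.edgeSet = Nat.card (H ⟨0, hr⟩).edgeSet := by
    have h1 := hKH'.2
    have h2 := (hkcyc ⟨0, hr⟩).2
    rw [card_edgeFinset_eq_natCard'] at h1 h2
    omega
  by_cases hHiso : ∃ i, Nonempty (H' ≃g H i)
  · obtain ⟨i, ⟨f⟩⟩ := hHiso
    have hM : M1 H' = M1 (H ⟨0, hr⟩) := (M1_iso' f).trans (heq i ⟨0, hr⟩)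
    by_cases hGG : G = addClique G S
    · have eGA : G ≃g addClique G S :=
        { toEquiv := Equiv.refl _
          map_rel_iff' := by intro u v; rw [← hGG]; rfl }
      exact absurd ⟨i, ⟨(eGA.trans isoGhat).trans (joinIsoLeft' _ f)⟩⟩ hiso
    · have h1 : M1 G < M1 (addClique G S) := M1_lt_of_lt' hle hGG
      have h2 : M1 (addClique G S) = M1 (joinG H' (SimpleGraph.completeGraph (Fin p))) := M1_iso' isoGhat
      exact lt_of_lt_of_le (h2 ▸ h1)
        (M1_join_le' (n - p) p H' (H ⟨0, hr⟩) hcard hM.le)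
  · have hlt : M1 H' < M1 (H ⟨0, hr⟩) := hmax H' hKH' hHiso
    have h1 : M1 G ≤ M1 (addClique G S) := M1_mono' hle
    have h2 : M1 (addClique G S) = M1 (joinG H' (SimpleGraph.completeGraph (Fin p))) := M1_iso' isoGhat
    exact lt_of_le_of_lt (h2 ▸ h1)
      (M1_join_lt' (n - p) p H' (H ⟨0, hr⟩) hcard hlt)
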